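/- Let g : ℝⁿ → ℝ be convex with ‖v‖ ≤ G for every subgradient v ∈ ∂g(x) at every x. Let F* := inf_x {Q(x) + h(x) − g(x)} > −∞ for some functions Q, h. Then for any μ > 0 and all (x, z), the potential L(x,z) := Q(x) + h(x) + (1/(2μ))‖x − z‖² − M_{μg}(z) satisfies L(x,z) ≥ F* − G²μ/2. -/

import Mathlib

open scoped RealInnerProductSpace


lemma exists_subgradient {n : ℕ} (g : EuclideanSpace ℝ (Fin n) → ℝ)
    (hgconv : ConvexOn ℝ Set.univ g) (x₀ : EuclideanSpace ℝ (Fin n)) :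
    ∃ v : EuclideanSpace ℝ (Fin n), ∀ y, g x₀ + ⟪v, y - x₀⟫ ≤ g y := by
  have hgc : Continuous g :=
    continuousOn_univ.mp (hgconv.continuousOn isOpen_univ)
  set S : Set (EuclideanSpace ℝ (Fin n) × ℝ) := {p | g p.1 < p.2} with hS
  have hSopen : IsOpen S := isOpen_lt (hgc.comp continuous_fst) continuous_snd
  have hSconv : Convex ℝ S := by
    intro p hp q hq a b ha hb hab
    simp only [hS, Set.mem_setOf_eq] at *
    have hle := hgconv.2 (Set.mem_univ p.1) (Set.mem_univ q.1) ha hb hab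
    simp only [smul_eq_mul] at hle
    have : a * g p.1 + b * g q.1 < a * p.2 + b * q.2 := by
      rcases eq_or_lt_of_le ha with rfl | ha'
      · simpa using mul_lt_mul_of_pos_left hq (by linarith : (0:ℝ) < b)
      rcases eq_or_lt_of_le hb with rfl | hb'
      · simpa using mul_lt_mul_of_pos_left hp ha'
      exact add_lt_add (mul_lt_mul_of_pos_left hp ha') (mul_lt_mul_of_pos_left hq hb')
    calc g (a • p + b • q).1 = g (a • p.1 + b • q.1) := rfl
      _ ≤ a * g p.1 + b * g q.1 := hle
      _ < a * p.2 + b * q.2 := this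
      _ = (a • p + b • q).2 := rfl
  have hx₀ : (x₀, g x₀) ∉ S := by simp [hS]
  obtain ⟨f, hf⟩ := geometric_hahn_banach_open_point hSconv hSopen hx₀
  have hdecomp : ∀ (y : EuclideanSpace ℝ (Fin n)) (t : ℝ),
      f (y, t) = f (y, 0) + t * f (0, 1) := by
    intro y t
    have h1 : (y, t) = (y, (0:ℝ)) + t • ((0: EuclideanSpace ℝ (Fin n)), (1:ℝ)) := by
      simp [Prod.ext_iff]
    rw [h1, map_add, map_smul, smul_eq_mul]
  set c : ℝ := f (0, 1) with hc
  have key : ∀ (y : EuclideanSpace ℝ (Fin n)) (t : ℝ), g y < t →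
      f (y,0) + t * c < f (x₀,0) + g x₀ * c := by
    intro y t ht
    have h2 := hf (y, t) ht
    rwa [hdecomp y t, hdecomp x₀ (g x₀)] at h2
  have hc0 : c < 0 := by
    have h1 := key x₀ (g x₀ + 1) (by linarith)
    nlinarith
  have hnc : (0:ℝ) < -c := by linarith
  have key2 : ∀ y, f (y,0) + g y * c ≤ f (x₀,0) + g x₀ * c := by
    intro y
    by_contra hcon
    push_neg at hcon
    set δ := (f (y,0) + g y * c) - (f (x₀,0) + g x₀ * c) with hδ
    have hδ0 : 0 < δ := by linarith
    have hpos : 0 < δ / (2 * (-c)) := by positivity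
    have h3 := key y (g y + δ / (2 * (-c))) (by linarith)
    clear_value δ
    have hcne : c ≠ 0 := ne_of_lt hc0
    have h4 : (δ / (2 * (-c))) * c = -(δ/2) := by field_simp
    nlinarith
  set φ : EuclideanSpace ℝ (Fin n) →L[ℝ] ℝ :=
    f.comp (ContinuousLinearMap.inl ℝ (EuclideanSpace ℝ (Fin n)) ℝ) with hφ
  have hφval : ∀ y, φ y = f (y, 0) := fun y => rfl
  refine ⟨(InnerProductSpace.toDual ℝ _).symm ((-c)⁻¹ • φ), fun y => ?_⟩
  have hvinner : ⟪(InnerProductSpace.toDual ℝ _).symm ((-c)⁻¹ • φ), y - x₀⟫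
      = (-c)⁻¹ * (f (y,0) - f (x₀,0)) := by
    rw [InnerProductSpace.toDual_symm_apply]
    simp only [ContinuousLinearMap.smul_apply, map_sub, smul_eq_mul]
    rw [hφval, hφval]
    ring
  rw [hvinner]
  have h2 := key2 y
  have : (-c)⁻¹ * (f (y,0) - f (x₀,0)) ≤ g y - g x₀ := by
    rw [inv_mul_le_iff₀ hnc]
    nlinarith
  linarith

/-- If `g` is convex with all subgradients bounded by `G`, and
`F* ≤ Q x + h x − g x` for all `x`, then for any `μ > 0` the potential
`L(x,z) = Q x + h x + (1/(2μ))‖x − z‖² − M_{μg}(z)` is bounded below by `F* − G²μ/2`. -/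
theorem stmt11 {n : ℕ} (g Q h : EuclideanSpace ℝ (Fin n) → ℝ) (G Fstar μ : ℝ)
    (hμ : 0 < μ) (hG : 0 ≤ G)
    (hgconv : ConvexOn ℝ Set.univ g)
    (hsub : ∀ x v : EuclideanSpace ℝ (Fin n),
      (∀ y, g x + ⟪v, y - x⟫ ≤ g y) → ‖v‖ ≤ G)
    (hFstar : ∀ x, Fstar ≤ Q x + h x - g x) :
    ∀ x z : EuclideanSpace ℝ (Fin n),
      Fstar - G ^ 2 * μ / 2 ≤
        Q x + h x + 1 / (2 * μ) * ‖x - z‖ ^ 2 -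
          ⨅ y : EuclideanSpace ℝ (Fin n), (g y + 1 / (2 * μ) * ‖y - z‖ ^ 2) := by
  intro x z
  obtain ⟨v, hv⟩ := exists_subgradient g hgconv z
  have hvG : ‖v‖ ≤ G := hsub z v hv
  have hbdd : BddBelow (Set.range fun y : EuclideanSpace ℝ (Fin n) =>
      g y + 1 / (2 * μ) * ‖y - z‖ ^ 2) := by
    refine ⟨g z - G ^ 2 * μ / 2, ?_⟩
    rintro _ ⟨y, rfl⟩
    have h1 : g z + ⟪v, y - z⟫ ≤ g y := hv y
    have h2 : -(‖v‖ * ‖y - z‖) ≤ ⟪v, y - z⟫ := by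
      have := abs_real_inner_le_norm v (y - z)
      cases abs_le.mp this with
      | intro hl hr => linarith
    have h3 : ‖v‖ * ‖y - z‖ ≤ G * ‖y - z‖ :=
      mul_le_mul_of_nonneg_right hvG (norm_nonneg _)
    have h4 : 1 / (2 * μ) * ‖y - z‖ ^ 2 - G * ‖y - z‖ ≥ -(G ^ 2 * μ / 2) := by
      have key := mul_nonneg (by positivity : (0:ℝ) ≤ 1 / (2 * μ))
        (sq_nonneg (‖y - z‖ - G * μ))
      have hinv : (2 * μ) * (1 / (2 * μ)) = 1 := by field_simp
      nlinarith [sq_nonneg (G * μ)]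
    simp only [Set.mem_setOf_eq]
    nlinarith
  have hle : (⨅ y : EuclideanSpace ℝ (Fin n), (g y + 1 / (2 * μ) * ‖y - z‖ ^ 2))
      ≤ g x + 1 / (2 * μ) * ‖x - z‖ ^ 2 := ciInf_le hbdd x
  have hF := hFstar x
  have hGμ : 0 ≤ G ^ 2 * μ / 2 := by positivity
  linarith
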